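/- For every N ∈ ℕ, N ≥ 1, the series Σ_{n ≥ N+1} ((q−n)²+1)^{−1} and Σ_{n ≥ N+1} ((q+n)²+1)^{−1} converge uniformly on the open ball B(0,N) = {q ∈ ℍ : |q| < N} (all terms being defined there, since the quaternions (q∓n)²+1 do not vanish for |q| < N and n ≥ N+1), and their sums are slice regular functions on B(0,N). -/

import Mathlib

open Quaternion Filter Topology

noncomputable section

/-- The 2-sphere `𝕊 = {q ∈ ℍ : q² = -1}` of quaternionic imaginary units. -/
def QS : Set ℍ[ℝ] := {q | q ^ 2 = -1}

/-- The slice function `g_I(x,y) = f(x + yI)`. -/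
def sliceFun (f : ℍ[ℝ] → ℍ[ℝ]) (I : ℍ[ℝ]) (p : ℝ × ℝ) : ℍ[ℝ] :=
  f ((p.1 : ℍ[ℝ]) + p.2 • I)

/-- `f` is slice regular on `Ω`: for each imaginary unit `I`, the slice function
`g_I(x,y) = f(x+yI)` is real differentiable and satisfies `∂g/∂x + I ∂g/∂y = 0`
at every point `(x,y)` with `x + yI ∈ Ω`. -/
def SliceRegularOn (f : ℍ[ℝ] → ℍ[ℝ]) (Ω : Set ℍ[ℝ]) : Prop :=
  ∀ I ∈ QS, ∀ p : ℝ × ℝ, ((p.1 : ℍ[ℝ]) + p.2 • I) ∈ Ω →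
    DifferentiableAt ℝ (sliceFun f I) p ∧
    fderiv ℝ (sliceFun f I) p (1, 0) + I * fderiv ℝ (sliceFun f I) p (0, 1) = 0

/-- The 2-sphere `x + y𝕊 = {x + yJ : J ∈ 𝕊}` (a real point when `y = 0`). -/
def qSphere (x y : ℝ) : Set ℍ[ℝ] := {q | ∃ I ∈ QS, q = (x : ℍ[ℝ]) + y • I}

/-- The symmetric open set `U(x₀+y₀𝕊, R) = {q : |(q-x₀)² + y₀²| < R²}`. -/
def sphU (x0 y0 R : ℝ) : Set ℍ[ℝ] :=
  {q | ‖(q - (x0 : ℍ[ℝ])) ^ 2 + ((y0 : ℍ[ℝ])) ^ 2‖ < R ^ 2}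

/-- `Ω` is axially symmetric. -/
def AxSymm (Ω : Set ℍ[ℝ]) : Prop :=
  ∀ x y : ℝ, ∀ I ∈ QS, ((x : ℍ[ℝ]) + y • I) ∈ Ω → qSphere x y ⊆ Ω

/-- `Ω` is a symmetric slice domain: an axially symmetric, open, connected set that
meets the real axis and whose intersection with each slice `L_I = ℝ + ℝI` is connected. -/
def SymmSliceDomain (Ω : Set ℍ[ℝ]) : Prop :=
  IsOpen Ω ∧ IsConnected Ω ∧ AxSymm Ω ∧ (∃ r : ℝ, (r : ℍ[ℝ]) ∈ Ω) ∧
    ∀ I ∈ QS, IsConnected {q ∈ Ω | ∃ a b : ℝ, q = (a : ℍ[ℝ]) + b • I}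

namespace TailSeriesAux

/-- Quaternionic term of the series (with sign `s`), zero below the threshold `N+1`. -/
def Tq (s : ℝ) (N n : ℕ) (q : ℍ[ℝ]) : ℍ[ℝ] :=
  if N + 1 ≤ n then ((q + ((s * n : ℝ) : ℍ[ℝ])) ^ 2 + 1)⁻¹ else 0

/-- Complex term of the series (with sign `s`), zero below the threshold `N+1`. -/
def Tc (s : ℝ) (N n : ℕ) (z : ℂ) : ℂ :=
  if N + 1 ≤ n then ((z + ((s * n : ℝ) : ℂ)) ^ 2 + 1)⁻¹ else 0

/-- Majorant sequence. -/
def u (N n : ℕ) : ℝ := if N + 1 ≤ n then (((n : ℝ) - N) ^ 2)⁻¹ else 0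

lemma u_nonneg (N n : ℕ) : 0 ≤ u N n := by
  unfold u; split <;> positivity

lemma summable_u (N : ℕ) : Summable (u N) := by
  rw [← summable_nat_add_iff (N + 1)]
  have hs : Summable (fun n : ℕ => (((n : ℝ) + 1) ^ 2)⁻¹) := by
    have h0 : Summable (fun n : ℕ => ((n : ℝ) ^ 2)⁻¹) :=
      Real.summable_nat_pow_inv.mpr one_lt_two
    have := (summable_nat_add_iff (f := fun n : ℕ => ((n : ℝ) ^ 2)⁻¹) 1).mpr h0
    refine this.congr fun n => ?_
    push_cast
    ring_nf
  refine hs.congr fun n => ?_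
  unfold u
  rw [if_pos (by omega)]
  congr 1
  push_cast
  ring

lemma sq_le_of_sq_sq_le {a b : ℝ} (hb : 0 ≤ b) (h : a ^ 2 * a ^ 2 ≤ b * b) :
    a ^ 2 ≤ b := by
  nlinarith [sq_nonneg a, sq_nonneg (a ^ 2 - b), sq_nonneg (a ^ 2 + b)]

lemma le_norm_quat (q : ℍ[ℝ]) (c : ℝ) :
    (q.re + c) ^ 2 ≤ ‖(q + (c : ℍ[ℝ])) ^ 2 + 1‖ := by
  set w : ℍ[ℝ] := q + (c : ℍ[ℝ]) with hw
  have hwre : w.re = q.re + c := by simp [hw]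
  have key : w.re ^ 2 * w.re ^ 2 ≤ Quaternion.normSq (w ^ 2 + 1) := by
    rw [pow_two w, Quaternion.normSq_def']
    simp only [Quaternion.re_add, Quaternion.imI_add, Quaternion.imJ_add, Quaternion.imK_add,
      Quaternion.re_mul, Quaternion.imI_mul, Quaternion.imJ_mul, Quaternion.imK_mul,
      Quaternion.re_one, Quaternion.imI_one, Quaternion.imJ_one, Quaternion.imK_one]
    nlinarith [sq_nonneg (w.imI ^ 2 + w.imJ ^ 2 + w.imK ^ 2 - 1), sq_nonneg w.re,
      sq_nonneg w.imI, sq_nonneg w.imJ, sq_nonneg w.imK,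
      mul_nonneg (sq_nonneg w.re)
        (add_nonneg (add_nonneg (sq_nonneg w.imI) (sq_nonneg w.imJ)) (sq_nonneg w.imK))]
  have h2 : Quaternion.normSq (w ^ 2 + 1) = ‖w ^ 2 + 1‖ * ‖w ^ 2 + 1‖ :=
    Quaternion.normSq_eq_norm_mul_self _
  rw [← hwre]
  exact sq_le_of_sq_sq_le (norm_nonneg _) (by rw [← h2]; exact key)

lemma le_norm_cx (z : ℂ) (c : ℝ) :
    (z.re + c) ^ 2 ≤ ‖(z + (c : ℂ)) ^ 2 + 1‖ := by
  set w : ℂ := z + (c : ℂ) with hw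
  have hwre : w.re = z.re + c := by simp [hw]
  have key : w.re ^ 2 * w.re ^ 2 ≤ Complex.normSq (w ^ 2 + 1) := by
    rw [pow_two w, Complex.normSq_apply]
    simp only [Complex.add_re, Complex.add_im, Complex.mul_re, Complex.mul_im,
      Complex.one_re, Complex.one_im]
    nlinarith [sq_nonneg (w.im ^ 2 - 1), sq_nonneg w.re, sq_nonneg w.im,
      mul_nonneg (sq_nonneg w.re) (sq_nonneg w.im)]
  have h2 : Complex.normSq (w ^ 2 + 1) = ‖w ^ 2 + 1‖ * ‖w ^ 2 + 1‖ :=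
    (Complex.normSq_eq_norm_sq _).trans (by ring)
  rw [← hwre]
  exact sq_le_of_sq_sq_le (norm_nonneg _) (by rw [← h2]; exact key)

lemma abs_re_le_normq (q : ℍ[ℝ]) : |q.re| ≤ ‖q‖ := by
  have h := Quaternion.normSq_eq_norm_mul_self q
  rw [Quaternion.normSq_def'] at h
  rw [← Real.sqrt_sq_eq_abs, ← Real.sqrt_sq (norm_nonneg q)]
  apply Real.sqrt_le_sqrt
  nlinarith [sq_nonneg q.imI, sq_nonneg q.imJ, sq_nonneg q.imK]

lemma shift_sq {s : ℝ} (hs : s = 1 ∨ s = -1) {N n : ℕ} (hn : N + 1 ≤ n) {x : ℝ}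
    (hx : |x| < N) : ((n : ℝ) - N) ^ 2 ≤ (x + s * n) ^ 2 := by
  have hn' : (N : ℝ) + 1 ≤ (n : ℝ) := by exact_mod_cast hn
  have h1 := (abs_lt.mp hx).1
  have h2 := (abs_lt.mp hx).2
  rcases hs with rfl | rfl
  · have : (0 : ℝ) ≤ (x + (N : ℝ)) * (x + 2 * n - N) := by
      apply mul_nonneg <;> linarith
    nlinarith [this]
  · have : (0 : ℝ) ≤ (2 * (n : ℝ) - N - x) * ((N : ℝ) - x) := by
      apply mul_nonneg <;> linarith
    nlinarith [this]

lemma quat_denom_lb {s : ℝ} (hs : s = 1 ∨ s = -1) {N n : ℕ} (hn : N + 1 ≤ n)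
    {q : ℍ[ℝ]} (hq : ‖q‖ < N) :
    ((n : ℝ) - N) ^ 2 ≤ ‖(q + ((s * n : ℝ) : ℍ[ℝ])) ^ 2 + 1‖ := by
  have hre : |q.re| < N := lt_of_le_of_lt (abs_re_le_normq q) hq
  exact le_trans (shift_sq hs hn hre) (le_norm_quat q (s * n))

lemma cx_denom_lb {s : ℝ} (hs : s = 1 ∨ s = -1) {N n : ℕ} (hn : N + 1 ≤ n)
    {z : ℂ} (hz : ‖z‖ < N) :
    ((n : ℝ) - N) ^ 2 ≤ ‖(z + ((s * n : ℝ) : ℂ)) ^ 2 + 1‖ := by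
  have hz' : ‖z‖ < N := hz
  have hre : |z.re| < N := lt_of_le_of_lt (Complex.abs_re_le_norm z) hz'
  exact le_trans (shift_sq hs hn hre) (le_norm_cx z (s * n))

lemma one_le_shift {N n : ℕ} (hn : N + 1 ≤ n) : (1 : ℝ) ≤ ((n : ℝ) - N) ^ 2 := by
  have hn' : (N : ℝ) + 1 ≤ (n : ℝ) := by exact_mod_cast hn
  nlinarith

lemma quat_denom_ne {s : ℝ} (hs : s = 1 ∨ s = -1) {N n : ℕ} (hn : N + 1 ≤ n)
    {q : ℍ[ℝ]} (hq : ‖q‖ < N) : (q + ((s * n : ℝ) : ℍ[ℝ])) ^ 2 + 1 ≠ 0 := by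
  intro h0
  have h1 := quat_denom_lb hs hn hq
  rw [h0, norm_zero] at h1
  have := one_le_shift hn
  linarith

lemma cx_denom_ne {s : ℝ} (hs : s = 1 ∨ s = -1) {N n : ℕ} (hn : N + 1 ≤ n)
    {z : ℂ} (hz : ‖z‖ < N) : (z + ((s * n : ℝ) : ℂ)) ^ 2 + 1 ≠ 0 := by
  intro h0
  have h1 := cx_denom_lb hs hn hz
  rw [h0, norm_zero] at h1
  have := one_le_shift hn
  linarith

lemma Tq_norm_le {s : ℝ} (hs : s = 1 ∨ s = -1) (N : ℕ) :
    ∀ n (q : ℍ[ℝ]), q ∈ Metric.ball (0 : ℍ[ℝ]) (N : ℝ) → ‖Tq s N n q‖ ≤ u N n := by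
  intro n q hq
  rw [Metric.mem_ball, dist_zero_right] at hq
  unfold Tq u
  split
  · rename_i h
    rw [norm_inv]
    have hb := quat_denom_lb hs h hq
    have hpos : (0 : ℝ) < ((n : ℝ) - N) ^ 2 := lt_of_lt_of_le one_pos (one_le_shift h)
    exact inv_anti₀ hpos hb
  · simp

lemma Tc_norm_le {s : ℝ} (hs : s = 1 ∨ s = -1) (N : ℕ) :
    ∀ n (z : ℂ), z ∈ Metric.ball (0 : ℂ) (N : ℝ) → ‖Tc s N n z‖ ≤ u N n := by
  intro n z hz
  rw [Metric.mem_ball, dist_zero_right] at hz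
  unfold Tc u
  split
  · rename_i h
    rw [norm_inv]
    have hb := cx_denom_lb hs h hz
    have hpos : (0 : ℝ) < ((n : ℝ) - N) ^ 2 := lt_of_lt_of_le one_pos (one_le_shift h)
    exact inv_anti₀ hpos hb
  · simp

lemma Tq_summable {s : ℝ} (hs : s = 1 ∨ s = -1) (N : ℕ) {q : ℍ[ℝ]}
    (hq : q ∈ Metric.ball (0 : ℍ[ℝ]) (N : ℝ)) : Summable (fun n => Tq s N n q) :=
  Summable.of_norm <| Summable.of_nonneg_of_le (fun _ => norm_nonneg _)
    (fun n => Tq_norm_le hs N n q hq) (summable_u N)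

lemma Tc_summable {s : ℝ} (hs : s = 1 ∨ s = -1) (N : ℕ) {z : ℂ}
    (hz : z ∈ Metric.ball (0 : ℂ) (N : ℝ)) : Summable (fun n => Tc s N n z) :=
  Summable.of_norm <| Summable.of_nonneg_of_le (fun _ => norm_nonneg _)
    (fun n => Tc_norm_le hs N n z hz) (summable_u N)

lemma Tq_unif {s : ℝ} (hs : s = 1 ∨ s = -1) (N : ℕ) :
    TendstoUniformlyOn (fun M q => ∑ n ∈ Finset.range M, Tq s N n q)
      (fun q => ∑' n, Tq s N n q) atTop (Metric.ball (0 : ℍ[ℝ]) (N : ℝ)) :=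
  tendstoUniformlyOn_tsum_nat (summable_u N) (Tq_norm_le hs N)

lemma Tc_hol {s : ℝ} (hs : s = 1 ∨ s = -1) (N : ℕ) :
    DifferentiableOn ℂ (fun z => ∑' n, Tc s N n z) (Metric.ball (0 : ℂ) (N : ℝ)) := by
  have hu := tendstoUniformlyOn_tsum_nat (summable_u N) (Tc_norm_le hs N)
  refine hu.tendstoLocallyUniformlyOn.differentiableOn ?_ Metric.isOpen_ball
  refine Filter.Eventually.of_forall fun M => ?_
  refine DifferentiableOn.fun_sum fun n _ => ?_
  unfold Tc
  split
  · rename_i h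
    intro z hz
    apply DifferentiableAt.differentiableWithinAt
    refine DifferentiableAt.inv ?_ ?_
    · exact ((differentiableAt_id.add_const _).pow 2).add_const 1
    · exact cx_denom_ne hs h (by rwa [Metric.mem_ball, dist_zero_right] at hz)
  · exact differentiableOn_const 0

/-- The real-linear embedding `(x, y) ↦ x + y i` of `ℝ × ℝ` into `ℂ`. -/
def Emap : ℝ × ℝ →L[ℝ] ℂ :=
  (ContinuousLinearMap.fst ℝ ℝ ℝ).smulRight 1 +
    (ContinuousLinearMap.snd ℝ ℝ ℝ).smulRight Complex.I

lemma Emap_re (p : ℝ × ℝ) : (Emap p).re = p.1 := by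
  simp [Emap, Complex.add_re, Complex.smul_re]

lemma Emap_im (p : ℝ × ℝ) : (Emap p).im = p.2 := by
  simp [Emap, Complex.add_im, Complex.smul_im]

lemma Emap_one : Emap (1, 0) = 1 := by
  apply Complex.ext <;> simp [Emap_re, Emap_im]

lemma Emap_I : Emap (0, 1) = Complex.I := by
  apply Complex.ext <;> simp [Emap_re, Emap_im, Complex.I_re, Complex.I_im]

section Phi

variable {I : ℍ[ℝ]} (hI : I * I = -1)

lemma I_re_im (hI : I * I = -1) : I.re = 0 ∧ I.imI ^ 2 + I.imJ ^ 2 + I.imK ^ 2 = 1 := by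
  have e1 : I.re * I.re - I.imI * I.imI - I.imJ * I.imJ - I.imK * I.imK = -1 := by
    have := congrArg QuaternionAlgebra.re hI; simpa using this
  have e2 : I.re * I.imI + I.imI * I.re + I.imJ * I.imK - I.imK * I.imJ = 0 := by
    have := congrArg QuaternionAlgebra.imI hI; simpa using this
  have e3 : I.re * I.imJ - I.imI * I.imK + I.imJ * I.re + I.imK * I.imI = 0 := by
    have := congrArg QuaternionAlgebra.imJ hI; simpa using this
  have e4 : I.re * I.imK + I.imI * I.imJ - I.imJ * I.imI + I.imK * I.re = 0 := by
    have := congrArg QuaternionAlgebra.imK hI; simpa using this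
  have hre : I.re = 0 := by
    by_contra hre
    have hi : I.imI = 0 := by
      have : I.re * I.imI = 0 := by linarith
      rcases mul_eq_zero.mp this with h | h
      · exact absurd h hre
      · exact h
    have hj : I.imJ = 0 := by
      have : I.re * I.imJ = 0 := by linarith
      rcases mul_eq_zero.mp this with h | h
      · exact absurd h hre
      · exact h
    have hk : I.imK = 0 := by
      have : I.re * I.imK = 0 := by linarith
      rcases mul_eq_zero.mp this with h | h
      · exact absurd h hre
      · exact h
    rw [hi, hj, hk] at e1
    nlinarith [sq_nonneg I.re]
  refine ⟨hre, ?_⟩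
  rw [hre] at e1
  nlinarith

lemma norm_phi (hI : I * I = -1) (z : ℂ) : ‖(z.re : ℍ[ℝ]) + z.im • I‖ = ‖z‖ := by
  obtain ⟨h0, h1⟩ := I_re_im hI
  have hq : Quaternion.normSq ((z.re : ℍ[ℝ]) + z.im • I) = z.re ^ 2 + z.im ^ 2 := by
    rw [Quaternion.normSq_def']
    simp only [Quaternion.re_add, Quaternion.imI_add, Quaternion.imJ_add, Quaternion.imK_add,
      Quaternion.re_smul, Quaternion.imI_smul, Quaternion.imJ_smul, Quaternion.imK_smul,
      Quaternion.re_coe, Quaternion.imI_coe, Quaternion.imJ_coe, Quaternion.imK_coe,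
      smul_eq_mul, h0, mul_zero, add_zero, zero_add]
    nlinarith [h1]
  have hq2 : ‖(z.re : ℍ[ℝ]) + z.im • I‖ * ‖(z.re : ℍ[ℝ]) + z.im • I‖ = z.re ^ 2 + z.im ^ 2 := by
    rw [← Quaternion.normSq_eq_norm_mul_self]; exact hq
  have hz2 : ‖z‖ * ‖z‖ = z.re ^ 2 + z.im ^ 2 := by
    rw [← pow_two, Complex.sq_norm, Complex.normSq_apply]
    ring
  rw [← Real.sqrt_sq (norm_nonneg ((z.re : ℍ[ℝ]) + z.im • I)),
    ← Real.sqrt_sq (norm_nonneg z)]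
  rw [pow_two, pow_two, hq2, hz2]

end Phi

end TailSeriesAux

open TailSeriesAux in
lemma tailSeries_sliceRegular {s : ℝ} (hs : s = 1 ∨ s = -1) (N : ℕ) :
    SliceRegularOn (fun q => ∑' n, Tq s N n q) (Metric.ball (0 : ℍ[ℝ]) (N : ℝ)) := by
  intro I hI p hp
  have hI' : I * I = -1 := by rw [← pow_two]; exact hI
  set φ : ℂ →ₐ[ℝ] ℍ[ℝ] := Complex.liftAux I hI' with hφ
  have hφ_apply : ∀ z : ℂ, φ z = (z.re : ℍ[ℝ]) + z.im • I := by
    intro z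
    rw [hφ, Complex.liftAux_apply]
    congr 1
  have hφI : φ Complex.I = I := Complex.liftAux_apply_I I hI'
  have hφ_norm : ∀ z : ℂ, ‖φ z‖ = ‖z‖ := by
    intro z; rw [hφ_apply]; exact norm_phi hI' z
  set Φ : ℂ →L[ℝ] ℍ[ℝ] := LinearMap.toContinuousLinearMap φ.toLinearMap with hΦ
  have hΦ_apply : ∀ z : ℂ, Φ z = φ z := fun _ => rfl
  -- the complex sum
  set h : ℂ → ℂ := fun z => ∑' n, Tc s N n z with hh
  have hhol := Tc_hol hs N
  -- the base point on the slice
  set z : ℂ := Emap p with hz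
  have hzre : z.re = p.1 := Emap_re p
  have hzim : z.im = p.2 := Emap_im p
  have hφz : φ z = (p.1 : ℍ[ℝ]) + p.2 • I := by rw [hφ_apply, hzre, hzim]
  have hzball : z ∈ Metric.ball (0 : ℂ) (N : ℝ) := by
    rw [Metric.mem_ball, dist_zero_right, ← hφ_norm, hφz]
    rwa [Metric.mem_ball, dist_zero_right] at hp
  -- the term-by-term correspondence
  have hterm : ∀ (n : ℕ) (w : ℂ), φ (Tc s N n w) = Tq s N n (φ w) := by
    intro n w
    unfold Tc Tq
    split
    · rw [map_inv₀, map_add, map_one, map_pow, map_add]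
      congr 3
      rw [show ((s * n : ℝ) : ℂ) = algebraMap ℝ ℂ (s * n) from rfl, AlgHom.commutes]
      rfl
    · exact map_zero φ
  -- equality of the slice function with `Φ ∘ h ∘ Emap` near `p`
  have hfun : ∀ w : ℂ, w ∈ Metric.ball (0 : ℂ) (N : ℝ) →
      (∑' n, Tq s N n (φ w)) = Φ (h w) := by
    intro w hw
    show (∑' n, Tq s N n (φ w)) = Φ (∑' n, Tc s N n w)
    rw [ContinuousLinearMap.map_tsum Φ (Tc_summable hs N hw)]
    exact tsum_congr fun n => by rw [hΦ_apply]; exact (hterm n w).symm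
  set G : ℝ × ℝ → ℍ[ℝ] := fun p' => Φ (h (Emap p')) with hG
  have hEq : sliceFun (fun q => ∑' n, Tq s N n q) I =ᶠ[𝓝 p] G := by
    have hopen : IsOpen (Emap ⁻¹' Metric.ball (0 : ℂ) (N : ℝ)) :=
      Metric.isOpen_ball.preimage Emap.continuous
    filter_upwards [hopen.mem_nhds (by simpa [hz] using hzball)] with p' hp'
    have : (p'.1 : ℍ[ℝ]) + p'.2 • I = φ (Emap p') := by
      rw [hφ_apply, Emap_re, Emap_im]
    rw [sliceFun, this, hG]
    exact hfun (Emap p') hp'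
  -- differentiability of `h` at `z` and the chain rule
  have hda : DifferentiableAt ℂ h z :=
    (hhol z hzball).differentiableAt (Metric.isOpen_ball.mem_nhds hzball)
  set d : ℂ := deriv h z with hd
  have hder : HasFDerivAt h
      (((1 : ℂ →L[ℂ] ℂ).smulRight d).restrictScalars ℝ) z :=
    (hda.hasDerivAt.hasFDerivAt).restrictScalars ℝ
  have hGder : HasFDerivAt G
      (Φ.comp ((((1 : ℂ →L[ℂ] ℂ).smulRight d).restrictScalars ℝ).comp Emap)) p := by
    have h1 : HasFDerivAt (fun p' => h (Emap p'))
        ((((1 : ℂ →L[ℂ] ℂ).smulRight d).restrictScalars ℝ).comp Emap) p :=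
      by have := hder.comp p (Emap.hasFDerivAt (x := p)); exact this
    exact Φ.hasFDerivAt.comp p h1
  have hdiff : DifferentiableAt ℝ (sliceFun (fun q => ∑' n, Tq s N n q) I) p :=
    (Filter.EventuallyEq.differentiableAt_iff hEq).mpr hGder.differentiableAt
  refine ⟨hdiff, ?_⟩
  have hfd : fderiv ℝ (sliceFun (fun q => ∑' n, Tq s N n q) I) p =
      Φ.comp ((((1 : ℂ →L[ℂ] ℂ).smulRight d).restrictScalars ℝ).comp Emap) := by
    rw [hEq.fderiv_eq]
    exact hGder.fderiv
  rw [hfd]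
  simp only [ContinuousLinearMap.comp_apply, ContinuousLinearMap.coe_restrictScalars',
    ContinuousLinearMap.smulRight_apply, ContinuousLinearMap.one_apply]
  rw [show ((1, 0) : ℝ × ℝ) = ((1 : ℝ), (0 : ℝ)) from rfl,
    show ((0, 1) : ℝ × ℝ) = ((0 : ℝ), (1 : ℝ)) from rfl, Emap_one, Emap_I]
  have hone : (1 : ℂ) • d = d := one_smul _ _
  have hIs : Complex.I • d = Complex.I * d := by rw [smul_eq_mul]
  rw [hone, hIs, hΦ_apply, hΦ_apply, map_mul, hφI, ← mul_assoc, hI']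
  simp

/-- for `N ≥ 1`, the series `Σ_{n ≥ N+1} ((q∓n)²+1)⁻¹` have nonvanishing
denominators on the ball `B(0,N)`, converge uniformly there, and their sums are slice
regular on `B(0,N)`. -/
theorem tail_series_uniform_convergence (N : ℕ) (hN : 1 ≤ N) :
    (∀ q ∈ Metric.ball (0 : ℍ[ℝ]) (N : ℝ), ∀ n : ℕ, N + 1 ≤ n →
      (q - (n : ℍ[ℝ])) ^ 2 + 1 ≠ 0 ∧ (q + (n : ℍ[ℝ])) ^ 2 + 1 ≠ 0) ∧
    ∃ g₁ g₂ : ℍ[ℝ] → ℍ[ℝ],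
      TendstoUniformlyOn
        (fun M q => ∑ n ∈ Finset.Icc (N + 1) M, ((q - (n : ℍ[ℝ])) ^ 2 + 1)⁻¹)
        g₁ Filter.atTop (Metric.ball (0 : ℍ[ℝ]) (N : ℝ)) ∧
      TendstoUniformlyOn
        (fun M q => ∑ n ∈ Finset.Icc (N + 1) M, ((q + (n : ℍ[ℝ])) ^ 2 + 1)⁻¹)
        g₂ Filter.atTop (Metric.ball (0 : ℍ[ℝ]) (N : ℝ)) ∧
      SliceRegularOn g₁ (Metric.ball (0 : ℍ[ℝ]) (N : ℝ)) ∧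
      SliceRegularOn g₂ (Metric.ball (0 : ℍ[ℝ]) (N : ℝ)) := by
  classical
  have hcast1 : ∀ (n : ℕ) (q : ℍ[ℝ]),
      q + (((-1 : ℝ) * (n : ℕ) : ℝ) : ℍ[ℝ]) = q - (n : ℍ[ℝ]) := by
    intro n q
    have h : (((-1 : ℝ) * (n : ℕ) : ℝ) : ℍ[ℝ]) = -(n : ℍ[ℝ]) := by
      push_cast
      rw [neg_one_mul]
    rw [h, sub_eq_add_neg]
  have hcast2 : ∀ (n : ℕ) (q : ℍ[ℝ]),
      q + (((1 : ℝ) * (n : ℕ) : ℝ) : ℍ[ℝ]) = q + (n : ℍ[ℝ]) := by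
    intro n q
    have h : (((1 : ℝ) * (n : ℕ) : ℝ) : ℍ[ℝ]) = (n : ℍ[ℝ]) := by
      push_cast
      rw [one_mul]
    rw [h]
  have hicc : ∀ M : ℕ,
      Finset.Icc (N + 1) M = (Finset.range (M + 1)).filter (fun n => N + 1 ≤ n) := by
    intro M
    ext a
    simp only [Finset.mem_Icc, Finset.mem_range, Finset.mem_filter]
    omega
  have hsum1 : ∀ (M : ℕ) (q : ℍ[ℝ]),
      (∑ n ∈ Finset.Icc (N + 1) M, ((q - (n : ℍ[ℝ])) ^ 2 + 1)⁻¹)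
        = ∑ n ∈ Finset.range (M + 1), TailSeriesAux.Tq (-1) N n q := by
    intro M q
    rw [hicc M, Finset.sum_filter]
    refine Finset.sum_congr rfl fun n _ => ?_
    unfold TailSeriesAux.Tq
    split
    · rw [hcast1 n q]
    · rfl
  have hsum2 : ∀ (M : ℕ) (q : ℍ[ℝ]),
      (∑ n ∈ Finset.Icc (N + 1) M, ((q + (n : ℍ[ℝ])) ^ 2 + 1)⁻¹)
        = ∑ n ∈ Finset.range (M + 1), TailSeriesAux.Tq 1 N n q := by
    intro M q
    rw [hicc M, Finset.sum_filter]
    refine Finset.sum_congr rfl fun n _ => ?_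
    unfold TailSeriesAux.Tq
    split
    · rw [hcast2 n q]
    · rfl
  have hcomp : ∀ {F : ℕ → ℍ[ℝ] → ℍ[ℝ]} {g : ℍ[ℝ] → ℍ[ℝ]},
      TendstoUniformlyOn F g atTop (Metric.ball (0 : ℍ[ℝ]) (N : ℝ)) →
      TendstoUniformlyOn (fun M => F (M + 1)) g atTop
        (Metric.ball (0 : ℍ[ℝ]) (N : ℝ)) := by
    intro F g hF u hu
    exact (tendsto_add_atTop_nat 1).eventually (hF u hu)
  refine ⟨?_, ?_⟩
  · intro q hq n hn
    rw [Metric.mem_ball, dist_zero_right] at hq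
    constructor
    · have := TailSeriesAux.quat_denom_ne (s := -1) (Or.inr rfl) hn hq
      rwa [hcast1 n q] at this
    · have := TailSeriesAux.quat_denom_ne (s := 1) (Or.inl rfl) hn hq
      rwa [hcast2 n q] at this
  · refine ⟨fun q => ∑' n, TailSeriesAux.Tq (-1) N n q,
      fun q => ∑' n, TailSeriesAux.Tq 1 N n q, ?_, ?_, ?_, ?_⟩
    · have h2 := hcomp (TailSeriesAux.Tq_unif (s := -1) (Or.inr rfl) N)
      exact h2.congr (Filter.Eventually.of_forall fun M q _ => (hsum1 M q).symm)
    · have h2 := hcomp (TailSeriesAux.Tq_unif (s := 1) (Or.inl rfl) N)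
      exact h2.congr (Filter.Eventually.of_forall fun M q _ => (hsum2 M q).symm)
    · exact tailSeries_sliceRegular (Or.inr rfl) N
    · exact tailSeries_sliceRegular (Or.inl rfl) N
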